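/- The number s_op(n) of 2-quasilinear weak orderings on Xₙ counted up to isomorphism equals F_{n+2} − 1, where F_m is the m-th Fibonacci number; equivalently, the number of compositions (n₁,…,n_k) of n with n₂,…,n_k ∈ {1,2} equals F_{n+2} − 1. -/

import Mathlib

/-- Strict part of a weak ordering `R`. -/
def SLT {X : Type*} (R : X → X → Prop) (x y : X) : Prop := R x y ∧ ¬ R y x

/-- Symmetric part of a weak ordering `R`. -/
def SIM {X : Type*} (R : X → X → Prop) (x y : X) : Prop := R x y ∧ R y x

/-- A weak ordering is 2-quasilinear if there are no pairwise distinct `a,b,c,d`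
with `a ≺ b ∼ c ∼ d`. -/
def TwoQuasilinear {X : Type*} (R : X → X → Prop) : Prop :=
  ¬ ∃ a b c d : X, (a ≠ b ∧ a ≠ c ∧ a ≠ d ∧ b ≠ c ∧ b ≠ d ∧ c ≠ d) ∧
      SLT R a b ∧ SIM R b c ∧ SIM R c d

/-- 2-quasilinear weak orderings on `Fin n`. -/
def TwoQLWeakOrd (n : ℕ) : Type :=
  {R : Fin n → Fin n → Prop // (∀ x y, R x y ∨ R y x) ∧ Transitive R ∧ TwoQuasilinear R}

/-- Two weak orderings are isomorphic if some bijection carries one to the other. -/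
def isoRel (n : ℕ) (R S : TwoQLWeakOrd n) : Prop :=
  ∃ φ : Fin n ≃ Fin n, ∀ x y : Fin n, S.1 x y ↔ R.1 (φ x) (φ y)

namespace Stmt16


/-- compositions of `m` into parts 1 and 2, as an explicit list -/
def allowed : ℕ → List (List ℕ)
  | 0 => [[]]
  | 1 => [[1]]
  | (m+2) => (allowed (m+1)).map (1 :: ·) ++ (allowed m).map (2 :: ·)

lemma length_allowed : ∀ m, (allowed m).length = Nat.fib (m+1)
  | 0 => by simp [allowed]
  | 1 => by simp [allowed]
  | (m+2) => by
      have h := Nat.fib_add_two (n := m+1)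
      have h3 : Nat.fib (m+2+1) = Nat.fib (m+1+2) := rfl
      simp only [allowed, List.length_append, List.length_map, length_allowed (m+1),
        length_allowed m]
      omega

lemma mem_allowed : ∀ m (T : List ℕ), T ∈ allowed m ↔ (T.sum = m ∧ ∀ b ∈ T, b = 1 ∨ b = 2)
  | 0, T => by
      simp only [allowed, List.mem_singleton]
      constructor
      · rintro rfl; simp
      · rintro ⟨hs, hb⟩
        cases T with
        | nil => rfl
        | cons a T => exfalso; have := hb a (by simp); simp at hs; omega
  | 1, T => by
      simp only [allowed, List.mem_singleton]
      constructor
      · rintro rfl; simp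
      · rintro ⟨hs, hb⟩
        cases T with
        | nil => simp at hs
        | cons a T =>
          have ha := hb a (by simp)
          simp only [List.sum_cons] at hs
          have ha1 : a = 1 := by
            rcases ha with h | h
            · exact h
            · exfalso; omega
          subst ha1
          have : T.sum = 0 := by omega
          cases T with
          | nil => rfl
          | cons b T =>
            exfalso
            have hb2 := hb b (by simp)
            simp only [List.sum_cons] at this
            omega
  | (m+2), T => by
      simp only [allowed, List.mem_append, List.mem_map]
      constructor
      · rintro (⟨T1, h1, rfl⟩ | ⟨T2, h2, rfl⟩)
        · obtain ⟨hs, hb⟩ := (mem_allowed (m+1) T1).1 h1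
          refine ⟨by simp [hs]; omega, ?_⟩
          intro b hb'
          rcases List.mem_cons.1 hb' with rfl | h
          · left; rfl
          · exact hb b h
        · obtain ⟨hs, hb⟩ := (mem_allowed m T2).1 h2
          refine ⟨by simp [hs]; omega, ?_⟩
          intro b hb'
          rcases List.mem_cons.1 hb' with rfl | h
          · right; rfl
          · exact hb b h
      · rintro ⟨hs, hb⟩
        cases T with
        | nil => simp at hs
        | cons a T =>
          simp only [List.sum_cons] at hs
          rcases hb a (by simp) with rfl | rfl
          · left
            exact ⟨T, (mem_allowed (m+1) T).2 ⟨by omega, fun b h => hb b (by simp [h])⟩, rfl⟩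
          · right
            exact ⟨T, (mem_allowed m T).2 ⟨by omega, fun b h => hb b (by simp [h])⟩, rfl⟩

lemma nodup_allowed : ∀ m, (allowed m).Nodup
  | 0 => by simp [allowed]
  | 1 => by simp [allowed]
  | (m+2) => by
      simp only [allowed]
      refine List.Nodup.append ?_ ?_ ?_
      · exact (nodup_allowed (m+1)).map (fun a b h => by simpa using h)
      · exact (nodup_allowed m).map (fun a b h => by simpa using h)
      · intro L h1 h2
        simp only [List.mem_map] at h1 h2
        obtain ⟨T1, _, rfl⟩ := h1
        obtain ⟨T2, _, h⟩ := h2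
        simp at h

/-- all valid lists: first part arbitrary positive, remaining parts in {1,2} -/
def full (n : ℕ) : List (List ℕ) :=
  (List.range n).flatMap fun m => (allowed m).map ((n - m) :: ·)

lemma length_full (n : ℕ) : (full n).length + 1 = Nat.fib (n+2) := by
  induction n with
  | zero => simp [full]
  | succ n ih =>
    have : (full (n+1)).length = (full n).length + Nat.fib (n+1) := by
      simp only [full, List.length_flatMap, List.range_succ, List.map_append, List.sum_append,
        List.map_map]
      simp [length_allowed]
    have h := Nat.fib_add_two (n := n+1)
    have h2 : Nat.fib (n+1+1) = Nat.fib (n+2) := rfl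
    omega

lemma mem_full {n : ℕ} (hn : 1 ≤ n) (L : List ℕ) :
    L ∈ full n ↔ (L.sum = n ∧ (∀ b ∈ L, 0 < b) ∧ ∀ b ∈ L.tail, b = 1 ∨ b = 2) := by
  simp only [full, List.mem_flatMap, List.mem_map, List.mem_range]
  constructor
  · rintro ⟨m, hm, T, hT, rfl⟩
    obtain ⟨hs, hb⟩ := (mem_allowed m T).1 hT
    refine ⟨by simp [hs]; omega, ?_, by simpa using hb⟩
    intro b hb'
    rcases List.mem_cons.1 hb' with rfl | h
    · omega
    · rcases hb b h with rfl | rfl <;> omega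
  · rintro ⟨hs, hpos, htail⟩
    cases L with
    | nil => simp at hs; omega
    | cons a T =>
      simp only [List.sum_cons] at hs
      have ha : 0 < a := hpos a (by simp)
      simp only [List.tail_cons] at htail
      refine ⟨T.sum, by omega, T, (mem_allowed T.sum T).2 ⟨rfl, htail⟩, ?_⟩
      congr
      omega

lemma nodup_full (n : ℕ) : (full n).Nodup := by
  rw [full, List.nodup_flatMap]
  constructor
  · intro m _
    exact (nodup_allowed m).map (fun a b h => by simpa using h)
  · have hlt : List.Pairwise (· < ·) (List.range n) := List.pairwise_lt_range
    rw [List.pairwise_iff_forall_sublist]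
    intro m₁ m₂ hsub
    have hm12 : m₁ < m₂ := List.pairwise_iff_forall_sublist.mp hlt hsub
    have hm2 : m₂ ∈ List.range n := hsub.subset (by simp)
    simp only [List.mem_range] at hm2
    intro L hL1 hL2
    simp only [List.mem_map] at hL1 hL2
    obtain ⟨T1, -, h1⟩ := hL1
    obtain ⟨T2, -, h2⟩ := hL2
    rw [← h1] at h2
    simp only [List.cons.injEq] at h2
    omega



lemma card_goodComp (n : ℕ) (hn : 1 ≤ n) :
    Nat.card {c : Composition n // ∀ b ∈ c.blocks.tail, b = 1 ∨ b = 2}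
      = Nat.fib (n + 2) - 1 := by
  have e : {c : Composition n // ∀ b ∈ c.blocks.tail, b = 1 ∨ b = 2} ≃
      {L : List ℕ // L ∈ full n} :=
    { toFun := fun c => ⟨c.1.blocks, (mem_full hn _).2
        ⟨c.1.blocks_sum, fun b hb => c.1.blocks_pos hb, c.2⟩⟩
      invFun := fun L => ⟨⟨L.1, fun {i} hi => (((mem_full hn _).1 L.2).2.1 i hi),
        ((mem_full hn _).1 L.2).1⟩, ((mem_full hn _).1 L.2).2.2⟩
      left_inv := fun c => Subtype.ext (Composition.ext rfl)
      right_inv := fun L => rfl }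
  rw [Nat.card_congr e]
  have e2 : {L : List ℕ // L ∈ full n} ≃ {L : List ℕ // L ∈ (full n).toFinset} :=
    Equiv.subtypeEquivRight (fun L => (List.mem_toFinset).symm)
  rw [Nat.card_congr e2, Nat.card_eq_finsetCard, List.toFinset_card_of_nodup (nodup_full n)]
  have := length_full n
  omega




open Finset

/-! ### generic lemmas about sorted finsets of naturals -/

/-- number of elements of `s` below `u` -/
def rnk (s : Finset ℕ) (u : ℕ) : ℕ := #(s.filter (· < u))

lemma rnk_lt_card {s : Finset ℕ} {u : ℕ} (hu : u ∈ s) : rnk s u < s.card := by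
  apply Finset.card_lt_card
  constructor
  · exact Finset.filter_subset _ s
  · intro hsub
    have := Finset.mem_filter.1 (hsub hu)
    omega

lemma rnk_lt_rnk {s : Finset ℕ} {u w : ℕ} (hu : u ∈ s) (huw : u < w) : rnk s u < rnk s w := by
  apply Finset.card_lt_card
  constructor
  · intro v hv
    simp only [Finset.mem_filter] at hv ⊢
    exact ⟨hv.1, by omega⟩
  · intro hsub
    have := Finset.mem_filter.1 (hsub (Finset.mem_filter.2 ⟨hu, huw⟩))
    omega

lemma rnk_le_rnk (s : Finset ℕ) {u w : ℕ} (huw : u ≤ w) : rnk s u ≤ rnk s w := by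
  apply Finset.card_le_card
  intro v hv
  simp only [Finset.mem_filter] at hv ⊢
  exact ⟨hv.1, by omega⟩

lemma le_iff_rnk_le {s : Finset ℕ} {u w : ℕ} (hu : u ∈ s) (hw : w ∈ s) :
    u ≤ w ↔ rnk s u ≤ rnk s w := by
  constructor
  · exact fun h => rnk_le_rnk s h
  · intro h
    by_contra hc
    exact absurd h (by simpa using rnk_lt_rnk hw (by omega))

lemma eq_iff_rnk_eq {s : Finset ℕ} {u w : ℕ} (hu : u ∈ s) (hw : w ∈ s) :
    u = w ↔ rnk s u = rnk s w := by
  constructor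
  · rintro rfl; rfl
  · intro h
    have h1 := (le_iff_rnk_le hu hw).2 (le_of_eq h)
    have h2 := (le_iff_rnk_le hw hu).2 (le_of_eq h.symm)
    omega

lemma rnk_getElem (s : Finset ℕ) (i : ℕ) (hi : i < (s.sort (· ≤ ·)).length) :
    rnk s ((s.sort (· ≤ ·))[i]) = i := by
  set l := s.sort (· ≤ ·) with hl
  have hsor : l.Pairwise (· < ·) := (Finset.sortedLT_sort s).pairwise
  have hset : s.filter (· < l[i]) = (l.take i).toFinset := by
    ext u
    simp only [Finset.mem_filter, List.mem_toFinset]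
    constructor
    · rintro ⟨hus, hult⟩
      have : u ∈ l := (Finset.mem_sort _).2 hus
      obtain ⟨j, hj, rfl⟩ := List.getElem_of_mem this
      have hji : j < i := by
        by_contra hc
        rcases Nat.eq_or_lt_of_le (Nat.le_of_not_lt hc) with rfl | hlt
        · omega
        · have := hsor.rel_get_of_lt (a := ⟨i, hi⟩) (b := ⟨j, hj⟩) hlt
          simp only [List.get_eq_getElem] at this
          omega
      exact List.mem_take_iff_getElem.2 ⟨j, by omega, rfl⟩
    · intro hu
      obtain ⟨j, hj, hju⟩ := List.mem_take_iff_getElem.1 hu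
      subst hju
      have hjl : j < l.length := by omega
      refine ⟨(Finset.mem_sort _).1 (List.getElem_mem _), ?_⟩
      have := hsor.rel_get_of_lt (a := ⟨j, hjl⟩) (b := ⟨i, hi⟩) (by simp; omega)
      simpa using this
  rw [rnk, hset, List.toFinset_card_of_nodup ((Finset.sort_nodup _ _).sublist (List.take_sublist _ _)),
    List.length_take]
  omega



lemma toFinset_take_sort (s : Finset ℕ) (k : ℕ) :
    ((s.sort (· ≤ ·)).take k).toFinset = s.filter (fun u => rnk s u < k) := by
  ext u
  simp only [List.mem_toFinset, Finset.mem_filter]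
  constructor
  · intro hu
    obtain ⟨j, hj, hju⟩ := List.mem_take_iff_getElem.1 hu
    subst hju
    refine ⟨(Finset.mem_sort (α := ℕ) (· ≤ ·)).1 (List.getElem_mem _), ?_⟩
    rw [rnk_getElem s j (by omega)]
    omega
  · rintro ⟨hus, hr⟩
    obtain ⟨j, hj, hju⟩ := List.getElem_of_mem ((Finset.mem_sort (α := ℕ) (· ≤ ·)).2 hus)
    subst hju
    rw [rnk_getElem s j hj] at hr
    exact List.mem_take_iff_getElem.2 ⟨j, by omega, rfl⟩

lemma sum_take_map_sort (s : Finset ℕ) (g : ℕ → ℕ) (k : ℕ) :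
    (((s.sort (· ≤ ·)).take k).map g).sum = ∑ v ∈ s.filter (fun u => rnk s u < k), g v := by
  rw [← toFinset_take_sort]
  exact (List.sum_toFinset g ((Finset.sort_nodup _ _).sublist (List.take_sublist _ _))).symm

lemma sort_image_of_strictMonoOn (s : Finset ℕ) (m : ℕ → ℕ)
    (hm : ∀ a ∈ s, ∀ b ∈ s, a < b → m a < m b) :
    (s.image m).sort (· ≤ ·) = (s.sort (· ≤ ·)).map m := by
  have hinj : ∀ a ∈ (s : Finset ℕ).val, ∀ b ∈ s.val, m a = m b → a = b := by
    intro a ha b hb h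
    rcases lt_trichotomy a b with h' | h' | h'
    · exact absurd (hm a ha b hb h') (by omega)
    · exact h'
    · exact absurd (hm b hb a ha h') (by omega)
  refine (fun hp h1 h2 => List.Perm.eq_of_pairwise' (r := (· ≤ ·)) h1 h2 hp) ?_ ?_ ?_
  · apply Multiset.coe_eq_coe.1
    have h1 : (↑((s.sort (· ≤ ·)).map m) : Multiset ℕ) = Multiset.map m s.val := by
      conv_rhs => rw [← Finset.sort_eq (r := (· ≤ ·)) s]
      exact (Multiset.map_coe m _).symm
    rw [Finset.sort_eq, h1, Finset.image_val]
    exact Multiset.dedup_eq_self.2 (Multiset.Nodup.map_on hinj s.nodup)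
  · exact Finset.pairwise_sort _ _
  · rw [List.pairwise_map]
    apply List.Pairwise.imp_of_mem ?_ (Finset.sortedLT_sort s).pairwise
    intro a b ha hb hab
    exact le_of_lt (hm a ((Finset.mem_sort (· ≤ ·)).1 ha) b ((Finset.mem_sort (· ≤ ·)).1 hb) hab)

lemma card_filter_val_lt (n a : ℕ) :
    #(Finset.univ.filter fun y : Fin n => (y : ℕ) < a) = min a n := by
  rw [← Finset.card_range (min a n)]
  refine Finset.card_bij' (fun y _ => (y : ℕ))
    (fun b hb => (⟨b, by simp only [Finset.mem_range] at hb; omega⟩ : Fin n)) ?_ ?_ ?_ ?_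
  · intro y hy
    simp only [Finset.mem_filter, Finset.mem_univ, true_and] at hy
    simp only [Finset.mem_range]
    have := y.isLt
    omega
  · intro b hb
    simp only [Finset.mem_range] at hb
    simp only [Finset.mem_filter, Finset.mem_univ, true_and]
    omega
  · intro y hy
    rfl
  · intro b hb
    rfl

lemma mem_iff_val_lt_card {n : ℕ} {A : Finset (Fin n)}
    (hA : ∀ y z : Fin n, z ≤ y → y ∈ A → z ∈ A) {y : Fin n} : y ∈ A ↔ (y : ℕ) < A.card := by
  constructor
  · intro hy
    have hsub : Finset.univ.filter (fun z : Fin n => (z : ℕ) < (y : ℕ) + 1) ⊆ A := by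
      intro z hz
      simp only [Finset.mem_filter, Finset.mem_univ, true_and] at hz
      exact hA y z (Fin.le_def.2 (by omega)) hy
    have hc := Finset.card_le_card hsub
    rw [card_filter_val_lt] at hc
    have := y.isLt
    omega
  · intro hy
    by_contra hc
    have hsub : A ⊆ Finset.univ.filter (fun z : Fin n => (z : ℕ) < (y : ℕ)) := by
      intro z hz
      simp only [Finset.mem_filter, Finset.mem_univ, true_and]
      by_contra hzc
      exact hc (hA z y (Fin.le_def.2 (by omega)) hz)
    have h2 := Finset.card_le_card hsub
    rw [card_filter_val_lt] at h2
    have := y.isLt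
    omega



/-! ### invariants of weak orderings -/

attribute [local instance] Classical.propDecidable

/-- fiber cardinality of a function -/
noncomputable def fc {n : ℕ} (f : Fin n → ℕ) (v : ℕ) : ℕ :=
  #(Finset.univ.filter fun x => f x = v)

/-- image of a function as a finset -/
noncomputable def img {n : ℕ} (f : Fin n → ℕ) : Finset ℕ := Finset.image f Finset.univ

/-- the list of fiber cardinalities in increasing value order -/
noncomputable def compOf {n : ℕ} (f : Fin n → ℕ) : List ℕ :=
  ((img f).sort (· ≤ ·)).map (fc f)

/-- the rank of an element: number of elements strictly below it -/
noncomputable def rkOf {n : ℕ} (R : Fin n → Fin n → Prop) (x : Fin n) : ℕ :=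
  #(Finset.univ.filter fun y => SLT R y x)

lemma mem_img {n : ℕ} {f : Fin n → ℕ} {v : ℕ} : v ∈ img f ↔ ∃ x, f x = v := by
  simp [img]

lemma fc_pos {n : ℕ} {f : Fin n → ℕ} {v : ℕ} (hv : v ∈ img f) : 0 < fc f v := by
  obtain ⟨x, rfl⟩ := mem_img.1 hv
  apply Finset.card_pos.2
  exact ⟨x, by simp⟩

section WeakOrder

variable {n : ℕ} {R : Fin n → Fin n → Prop}

lemma slt_subset (htr : Transitive R) {x y : Fin n} (hxy : R x y) :
    (Finset.univ.filter fun z => SLT R z x) ⊆ (Finset.univ.filter fun z => SLT R z y) := by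
  intro z hz
  simp only [Finset.mem_filter, Finset.mem_univ, true_and] at hz ⊢
  simp only [SLT] at hz ⊢
  exact ⟨htr hz.1 hxy, fun hyz => hz.2 (htr hxy hyz)⟩

lemma rkOf_lt_rkOf (hTot : ∀ x y, R x y ∨ R y x) (htr : Transitive R) {x y : Fin n}
    (h : SLT R x y) : rkOf R x < rkOf R y := by
  apply Finset.card_lt_card
  constructor
  · exact slt_subset htr h.1
  · intro hsub
    have hx : x ∈ Finset.univ.filter fun z => SLT R z y := by
      simp only [Finset.mem_filter, Finset.mem_univ, true_and]
      exact h
    have := Finset.mem_filter.1 (hsub hx)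
    have hRxx : R x x := by rcases hTot x x with h' | h' <;> exact h'
    exact this.2.2 hRxx

lemma rel_iff_rkOf_le (hTot : ∀ x y, R x y ∨ R y x) (htr : Transitive R) (x y : Fin n) :
    R x y ↔ rkOf R x ≤ rkOf R y := by
  constructor
  · intro hxy
    by_cases hyx : R y x
    · exact Finset.card_le_card (slt_subset htr hxy)
    · exact le_of_lt (rkOf_lt_rkOf hTot htr ⟨hxy, hyx⟩)
  · intro hle
    by_contra hxy
    rcases hTot x y with h' | h'
    · exact hxy h'
    · exact absurd hle (by simpa using rkOf_lt_rkOf hTot htr ⟨h', hxy⟩)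

lemma rkOf_comp {S : Fin n → Fin n → Prop} (φ : Fin n ≃ Fin n)
    (h : ∀ x y, S x y ↔ R (φ x) (φ y)) (x : Fin n) : rkOf S x = rkOf R (φ x) := by
  refine Finset.card_bij' (fun y _ => φ y) (fun y _ => φ.symm y) ?_ ?_ ?_ ?_
  · intro y hy
    simp only [Finset.mem_filter, Finset.mem_univ, true_and] at hy ⊢
    simp only [SLT, h] at hy ⊢
    exact hy
  · intro y hy
    simp only [Finset.mem_filter, Finset.mem_univ, true_and] at hy ⊢
    simp only [SLT, h, Equiv.apply_symm_apply] at hy ⊢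
    exact hy
  · intro y _; simp
  · intro y _; simp

end WeakOrder

lemma img_comp_equiv {n : ℕ} (f : Fin n → ℕ) (e : Fin n ≃ Fin n) : img (f ∘ e) = img f := by
  ext v
  simp only [img, Finset.mem_image, Finset.mem_univ, true_and, Function.comp_apply]
  constructor
  · rintro ⟨x, rfl⟩; exact ⟨e x, rfl⟩
  · rintro ⟨x, rfl⟩; exact ⟨e.symm x, by simp⟩

lemma fc_comp_equiv {n : ℕ} (f : Fin n → ℕ) (e : Fin n ≃ Fin n) (v : ℕ) :
    fc (f ∘ e) v = fc f v := by
  refine Finset.card_bij' (fun y _ => e y) (fun y _ => e.symm y) ?_ ?_ ?_ ?_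
  · intro y hy
    simp only [Finset.mem_filter, Finset.mem_univ, true_and, Function.comp_apply] at hy ⊢
    exact hy
  · intro y hy
    simp only [Finset.mem_filter, Finset.mem_univ, true_and, Function.comp_apply] at hy ⊢
    simpa using hy
  · intro y _; simp
  · intro y _; simp

lemma compOf_comp_equiv {n : ℕ} (f : Fin n → ℕ) (e : Fin n ≃ Fin n) :
    compOf (f ∘ e) = compOf f := by
  rw [compOf, compOf, img_comp_equiv]
  exact List.map_congr_left fun v _ => fc_comp_equiv f e v

lemma compOf_congr {n : ℕ} {f h : Fin n → ℕ} (hfh : ∀ x y, f x ≤ f y ↔ h x ≤ h y) :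
    compOf f = compOf h := by
  have heq : ∀ x y : Fin n, (f x = f y ↔ h x = h y) := by
    intro x y
    constructor <;> intro e
    · exact le_antisymm ((hfh x y).1 (le_of_eq e)) ((hfh y x).1 (le_of_eq e.symm))
    · exact le_antisymm ((hfh x y).2 (le_of_eq e)) ((hfh y x).2 (le_of_eq e.symm))
  set m : ℕ → ℕ := fun v => if hv : ∃ x, f x = v then h hv.choose else 0 with hmdef
  have hmf : ∀ x, m (f x) = h x := by
    intro x
    have hv : ∃ x', f x' = f x := ⟨x, rfl⟩
    simp only [hmdef, dif_pos hv]
    exact (heq _ _).1 hv.choose_spec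
  have himg : img h = (img f).image m := by
    ext v
    simp only [img, Finset.mem_image, Finset.mem_univ, true_and]
    constructor
    · rintro ⟨x, rfl⟩
      exact ⟨f x, ⟨x, rfl⟩, hmf x⟩
    · rintro ⟨u, ⟨x, rfl⟩, rfl⟩
      exact ⟨x, (hmf x).symm⟩
  have hsm : ∀ a ∈ img f, ∀ b ∈ img f, a < b → m a < m b := by
    rintro a ha b hb hab
    obtain ⟨x, -, rfl⟩ := Finset.mem_image.1 ha
    obtain ⟨y, -, rfl⟩ := Finset.mem_image.1 hb
    rw [hmf, hmf]
    have h1 : ¬ f y ≤ f x := by omega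
    have h2 : ¬ h y ≤ h x := fun hc => h1 ((hfh y x).2 hc)
    omega
  have key : compOf h = compOf f := by
    rw [compOf, compOf, himg, sort_image_of_strictMonoOn _ _ hsm, List.map_map]
    apply List.map_congr_left
    intro v hv
    obtain ⟨x, -, rfl⟩ := Finset.mem_image.1 ((Finset.mem_sort (· ≤ ·)).1 hv)
    show fc h (m (f x)) = fc f (f x)
    rw [hmf]
    unfold fc
    congr 1
    ext z
    simp only [Finset.mem_filter, Finset.mem_univ, true_and]
    exact (heq z x).symm
  exact key.symm



/-! ### fibers of monotone functions are determined by `compOf` -/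

section Mono

variable {n : ℕ} {f : Fin n → ℕ}

/-- number of elements with value strictly below that of `x` -/
noncomputable def lo (f : Fin n → ℕ) (x : Fin n) : ℕ :=
  #(Finset.univ.filter fun y => f y < f x)

/-- number of elements with value at most that of `x` -/
noncomputable def hi (f : Fin n → ℕ) (x : Fin n) : ℕ :=
  #(Finset.univ.filter fun y => f y ≤ f x)

lemma monofib (hf : Monotone f) (x y : Fin n) :
    f y = f x ↔ (lo f x ≤ (y : ℕ) ∧ (y : ℕ) < hi f x) := by
  have hlt : (y : ℕ) < lo f x ↔ f y < f x := by
    rw [lo, ← mem_iff_val_lt_card (A := Finset.univ.filter fun z => f z < f x)]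
    · simp
    · intro a b hba ha
      simp only [Finset.mem_filter, Finset.mem_univ, true_and] at ha ⊢
      exact lt_of_le_of_lt (hf hba) ha
  have hle : (y : ℕ) < hi f x ↔ f y ≤ f x := by
    rw [hi, ← mem_iff_val_lt_card (A := Finset.univ.filter fun z => f z ≤ f x)]
    · simp
    · intro a b hba ha
      simp only [Finset.mem_filter, Finset.mem_univ, true_and] at ha ⊢
      exact le_trans (hf hba) ha
  constructor
  · intro h
    refine ⟨Nat.le_of_not_lt fun hc => ?_, hle.2 (le_of_eq h)⟩
    have := hlt.1 hc
    omega
  · rintro ⟨h1, h2⟩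
    have h3 := hle.1 h2
    have h4 : ¬ (y : ℕ) < lo f x := by omega
    have h5 : ¬ f y < f x := fun hc => h4 (hlt.2 hc)
    omega


lemma lo_le_and_lt_hi (hf : Monotone f) (x : Fin n) :
    lo f x ≤ (x : ℕ) ∧ (x : ℕ) < hi f x := by
  have h := (monofib hf x x).1 rfl
  exact ⟨h.1, h.2⟩

lemma sum_take_compOf (f : Fin n → ℕ) (k : ℕ) :
    ((compOf f).take k).sum = ∑ v ∈ (img f).filter (fun u => rnk (img f) u < k), fc f v := by
  rw [compOf, ← List.map_take, sum_take_map_sort]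

lemma lo_eq_sum (f : Fin n → ℕ) (x : Fin n) :
    lo f x = ∑ v ∈ (img f).filter (· < f x), fc f v := by
  rw [lo, Finset.card_eq_sum_card_fiberwise (f := f)
    (t := (img f).filter (· < f x)) ?_]
  · apply Finset.sum_congr rfl
    intro v hv
    simp only [Finset.mem_filter] at hv
    rw [fc]
    congr 1
    ext z
    simp only [Finset.mem_filter, Finset.mem_univ, true_and]
    constructor
    · rintro ⟨-, h⟩; exact h
    · intro h; exact ⟨by omega, h⟩
  · intro y hy
    simp only [Finset.mem_coe, Finset.mem_filter, Finset.mem_univ, true_and] at hy ⊢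
    exact ⟨mem_img.2 ⟨y, rfl⟩, hy⟩

lemma hi_eq_sum (f : Fin n → ℕ) (x : Fin n) :
    hi f x = ∑ v ∈ (img f).filter (· ≤ f x), fc f v := by
  rw [hi, Finset.card_eq_sum_card_fiberwise (f := f)
    (t := (img f).filter (· ≤ f x)) ?_]
  · apply Finset.sum_congr rfl
    intro v hv
    simp only [Finset.mem_filter] at hv
    rw [fc]
    congr 1
    ext z
    simp only [Finset.mem_filter, Finset.mem_univ, true_and]
    constructor
    · rintro ⟨-, h⟩; exact h
    · intro h; exact ⟨by omega, h⟩
  · intro y hy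
    simp only [Finset.mem_coe, Finset.mem_filter, Finset.mem_univ, true_and] at hy ⊢
    exact ⟨mem_img.2 ⟨y, rfl⟩, hy⟩

lemma lo_eq_take (f : Fin n → ℕ) (x : Fin n) :
    lo f x = ((compOf f).take (rnk (img f) (f x))).sum := by
  rw [sum_take_compOf, lo_eq_sum]
  apply Finset.sum_congr ?_ (fun _ _ => rfl)
  apply Finset.filter_congr
  intro u hu
  constructor
  · intro h; exact rnk_lt_rnk hu h
  · intro h
    by_contra hc
    exact absurd (rnk_le_rnk (img f) (Nat.le_of_not_lt hc)) (by omega)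

lemma hi_eq_take (f : Fin n → ℕ) (x : Fin n) :
    hi f x = ((compOf f).take (rnk (img f) (f x) + 1)).sum := by
  rw [sum_take_compOf, hi_eq_sum]
  apply Finset.sum_congr ?_ (fun _ _ => rfl)
  apply Finset.filter_congr
  intro u hu
  have hfx : f x ∈ img f := mem_img.2 ⟨x, rfl⟩
  constructor
  · intro h
    have := rnk_le_rnk (img f) h
    omega
  · intro h
    exact (le_iff_rnk_le hu hfx).2 (by omega)

lemma sum_take_mono (l : List ℕ) : Monotone fun k => (l.take k).sum := by
  apply monotone_nat_of_le_succ
  intro k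
  by_cases hk : k < l.length
  · rw [List.sum_take_succ _ _ hk]
    omega
  · rw [List.take_of_length_le (by omega), List.take_of_length_le (by omega)]

lemma rnk_img_eq_of_compOf_eq {f h : Fin n → ℕ} (hf : Monotone f) (hh : Monotone h)
    (hc : compOf f = compOf h) (x : Fin n) : rnk (img f) (f x) = rnk (img h) (h x) := by
  by_contra hne
  have key : ∀ (f h : Fin n → ℕ), Monotone f → Monotone h → compOf f = compOf h →
      ∀ x : Fin n, rnk (img f) (f x) < rnk (img h) (h x) → False := by
    intro f h hf hh hc x hlt
    have h1 : hi f x ≤ lo h x := by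
      rw [hi_eq_take, lo_eq_take, hc]
      exact sum_take_mono _ (by omega)
    have h2 := lo_le_and_lt_hi hf x
    have h3 := lo_le_and_lt_hi hh x
    omega
  rcases Nat.lt_or_ge (rnk (img f) (f x)) (rnk (img h) (h x)) with hlt | hge
  · exact key f h hf hh hc x hlt
  · exact key h f hh hf hc.symm x (by omega)

lemma le_iff_of_compOf_eq {f h : Fin n → ℕ} (hf : Monotone f) (hh : Monotone h)
    (hc : compOf f = compOf h) (x y : Fin n) : f x ≤ f y ↔ h x ≤ h y := by
  have hfib : ∀ x y : Fin n, f y = f x ↔ h y = h x := by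
    intro x y
    rw [monofib hf, monofib hh, lo_eq_take, hi_eq_take, lo_eq_take, hi_eq_take, hc,
      rnk_img_eq_of_compOf_eq hf hh hc]
  have hE : ∀ (g : Fin n → ℕ), Monotone g → ∀ x y : Fin n, (g x ≤ g y ↔ (x ≤ y ∨ g y = g x)) := by
    intro g hg x y
    constructor
    · intro hle
      by_cases hxy : x ≤ y
      · left; exact hxy
      · right
        have : y ≤ x := le_of_not_ge hxy
        exact le_antisymm (hg this) hle
    · rintro (hxy | heq)
      · exact hg hxy
      · omega
  rw [hE f hf, hE h hh, hfib]

end Mono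

/-! ### compositions and their canonical weak orderings -/

section Comp

variable {n : ℕ}

lemma sizeUpTo_mono (c : Composition n) : Monotone c.sizeUpTo := by
  intro i j hij
  simp only [Composition.sizeUpTo]
  exact sum_take_mono c.blocks hij

lemma index_eq_iff (c : Composition n) (x : Fin n) (j : Fin c.length) :
    c.index x = j ↔ (c.sizeUpTo j ≤ (x : ℕ) ∧ (x : ℕ) < c.sizeUpTo ((j : ℕ) + 1)) := by
  constructor
  · rintro rfl
    exact ⟨c.sizeUpTo_index_le x, by simpa using c.lt_sizeUpTo_index_succ x⟩
  · rintro ⟨h1, h2⟩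
    have hi1 := c.sizeUpTo_index_le x
    have hi2 : (x : ℕ) < c.sizeUpTo ((c.index x : ℕ) + 1) := by
      simpa using c.lt_sizeUpTo_index_succ x
    apply Fin.ext
    by_contra hne
    rcases Nat.lt_or_ge (c.index x : ℕ) (j : ℕ) with hlt | hge
    · have := sizeUpTo_mono c (show (c.index x : ℕ) + 1 ≤ (j : ℕ) by omega)
      omega
    · have hlt : (j : ℕ) < (c.index x : ℕ) := by omega
      have := sizeUpTo_mono c (show (j : ℕ) + 1 ≤ (c.index x : ℕ) by omega)
      omega

lemma card_index_fiber (c : Composition n) (j : Fin c.length) :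
    #(Finset.univ.filter fun x : Fin n => c.index x = j) = c.blocksFun j := by
  have hab : c.sizeUpTo j ≤ c.sizeUpTo ((j : ℕ) + 1) := sizeUpTo_mono c (by omega)
  have hbn : c.sizeUpTo ((j : ℕ) + 1) ≤ n := c.sizeUpTo_le _
  have hset : Finset.univ.filter (fun x : Fin n => c.index x = j) =
      (Finset.univ.filter fun x : Fin n => (x : ℕ) < c.sizeUpTo ((j : ℕ) + 1)) \
      (Finset.univ.filter fun x : Fin n => (x : ℕ) < c.sizeUpTo j) := by
    ext x
    simp only [Finset.mem_filter, Finset.mem_univ, true_and, Finset.mem_sdiff,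
      index_eq_iff c x j]
    omega
  rw [hset, Finset.card_sdiff_of_subset ?_, card_filter_val_lt, card_filter_val_lt]
  · have := c.sizeUpTo_succ j.isLt
    rw [Composition.blocksFun]
    simp only [List.get_eq_getElem]
    omega
  · intro x hx
    simp only [Finset.mem_filter, Finset.mem_univ, true_and] at hx ⊢
    omega

lemma index_mono (c : Composition n) : Monotone fun x : Fin n => (c.index x : ℕ) := by
  intro x y hxy
  by_contra hc
  replace hc : ¬ ((c.index x : ℕ) ≤ (c.index y : ℕ)) := hc
  have h1 := c.sizeUpTo_index_le x
  have h2 : (y : ℕ) < c.sizeUpTo ((c.index y : ℕ) + 1) := by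
    simpa using c.lt_sizeUpTo_index_succ y
  have h3 := sizeUpTo_mono c (show ((c.index y : ℕ) + 1) ≤ (c.index x : ℕ) by omega)
  have h4 : (y : ℕ) ≤ (x : ℕ) → False := by
    intro h
    omega
  exact h4 (by omega)

lemma compOf_index (c : Composition n) :
    compOf (fun x => (c.index x : ℕ)) = c.blocks := by
  have himg : img (fun x : Fin n => (c.index x : ℕ)) = Finset.range c.length := by
    ext v
    simp only [Finset.mem_range, mem_img]
    constructor
    · rintro ⟨x, rfl⟩; exact (c.index x).isLt
    · intro hv
      have hpos : 0 < c.blocksFun ⟨v, hv⟩ := c.one_le_blocksFun _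
      refine ⟨c.embedding ⟨v, hv⟩ ⟨0, hpos⟩, ?_⟩
      rw [c.index_embedding]
  rw [compOf, himg, Finset.sort_range]
  apply List.ext_getElem
  · simp [Composition.length]
  · intro i h1 h2
    simp only [List.getElem_map, List.getElem_range]
    have hi : i < c.length := by simpa using h1
    have : fc (fun x : Fin n => (c.index x : ℕ)) i =
        #(Finset.univ.filter fun x : Fin n => c.index x = ⟨i, hi⟩) := by
      rw [fc]
      congr 1
      ext x
      simp only [Finset.mem_filter, Finset.mem_univ, true_and, Fin.ext_iff]
    rw [this, card_index_fiber]
    rfl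

lemma compOf_sum (f : Fin n → ℕ) : (compOf f).sum = n := by
  rw [compOf, ← List.sum_toFinset (fc f) (Finset.sort_nodup _ _), Finset.sort_toFinset]
  have := Finset.card_eq_sum_card_fiberwise (f := f) (s := (Finset.univ : Finset (Fin n)))
    (t := img f) (fun x _ => mem_img.2 ⟨x, rfl⟩)
  simp only [Finset.card_univ, Fintype.card_fin] at this
  exact (show (img f).sum (fc f) = ∑ b ∈ img f, #(Finset.univ.filter fun a => f a = b) from rfl).trans this.symm

lemma compOf_pos (f : Fin n → ℕ) {b : ℕ} (hb : b ∈ compOf f) : 0 < b := by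
  rw [compOf, List.mem_map] at hb
  obtain ⟨v, hv, rfl⟩ := hb
  exact fc_pos ((Finset.mem_sort (· ≤ ·)).1 hv)

end Comp

/-! ### 2-quasilinearity transfers -/

section QL

variable {n : ℕ}

/-- the canonical weak ordering attached to a composition -/
def RC (c : Composition n) : Fin n → Fin n → Prop :=
  fun x y => (c.index x : ℕ) ≤ (c.index y : ℕ)

lemma RC_total (c : Composition n) : ∀ x y, RC c x y ∨ RC c y x :=
  fun x y => Nat.le_total _ _

lemma RC_trans (c : Composition n) : Transitive (RC c) :=
  fun _ _ _ hab hbc => le_trans hab hbc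

lemma blocksFun_mem_tail (c : Composition n) {j : Fin c.length} (hj : 0 < (j : ℕ)) :
    c.blocksFun j ∈ c.blocks.tail := by
  obtain ⟨i, hi⟩ : ∃ i, (j : ℕ) = i + 1 := ⟨(j : ℕ) - 1, by omega⟩
  have hjlen : (j : ℕ) < c.blocks.length := j.isLt
  have hlen : i < c.blocks.tail.length := by
    rw [List.length_tail]
    omega
  have he : c.blocks.tail[i] = c.blocksFun j := by
    rw [List.getElem_tail]
    rw [Composition.blocksFun, List.get_eq_getElem]
    simp only [hi]
  exact he ▸ List.getElem_mem hlen

lemma twoQL_RC (c : Composition n) (hc : ∀ b ∈ c.blocks.tail, b = 1 ∨ b = 2) :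
    TwoQuasilinear (RC c) := by
  rintro ⟨x1, x2, x3, x4, ⟨h12, h13, h14, h23, h24, h34⟩, hslt, hsim1, hsim2⟩
  have hlt : (c.index x1 : ℕ) < (c.index x2 : ℕ) := by
    rcases hslt with ⟨ha, hb⟩
    simp only [RC] at ha hb
    omega
  have he1 : c.index x2 = c.index x3 := Fin.ext (le_antisymm hsim1.1 hsim1.2)
  have he2 : c.index x3 = c.index x4 := Fin.ext (le_antisymm hsim2.1 hsim2.2)
  have hcard : 2 < #(Finset.univ.filter fun x : Fin n => c.index x = c.index x2) := by
    apply Finset.two_lt_card_iff.2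
    exact ⟨x2, x3, x4, by simp, by simp [he1.symm], by simp [he1.symm, he2.symm], h23, h24, h34⟩
  rw [card_index_fiber] at hcard
  have hmem := hc _ (blocksFun_mem_tail c (j := c.index x2) (by omega))
  omega

lemma tail_compOf_of_twoQL {R : Fin n → Fin n → Prop} (hTot : ∀ x y, R x y ∨ R y x)
    (htr : Transitive R) (hQ : TwoQuasilinear R) (σ : Fin n ≃ Fin n) :
    ∀ b ∈ (compOf (rkOf R ∘ σ)).tail, b = 1 ∨ b = 2 := by
  intro b hb
  set g : Fin n → ℕ := rkOf R ∘ σ with hg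
  rw [compOf, ← List.map_tail] at hb
  obtain ⟨v, hv, rfl⟩ := List.mem_map.1 hb
  have hvimg : v ∈ img g := (Finset.mem_sort (· ≤ ·)).1 (List.mem_of_mem_tail hv)
  obtain ⟨v0, rest, hcons⟩ : ∃ v0 rest, (img g).sort (· ≤ ·) = v0 :: rest := by
    cases hl2 : (img g).sort (· ≤ ·) with
    | nil => rw [hl2] at hv; simp at hv
    | cons a r => exact ⟨a, r, rfl⟩
  have hv0img : v0 ∈ img g := (Finset.mem_sort (· ≤ ·)).1 (by rw [hcons]; exact List.mem_cons_self)
  have hv0lt : v0 < v := by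
    have hs := (Finset.sortedLT_sort (img g)).pairwise
    rw [hcons] at hs hv
    exact List.rel_of_pairwise_cons hs hv
  have h1 : 0 < fc g v := fc_pos hvimg
  by_contra hcon
  push_neg at hcon
  have h3 : 2 < fc g v := by omega
  rw [fc] at h3
  obtain ⟨x2, x3, x4, hx2, hx3, hx4, h23, h24, h34⟩ := Finset.two_lt_card_iff.1 h3
  simp only [Finset.mem_filter, Finset.mem_univ, true_and] at hx2 hx3 hx4
  obtain ⟨x1, hx1⟩ := mem_img.1 hv0img
  have hrk : ∀ x : Fin n, rkOf R (σ x) = g x := fun x => rfl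
  apply hQ
  have hne1 : ∀ x : Fin n, g x = v → x1 ≠ x := by
    intro x hx hcc
    rw [hcc, hx] at hx1
    omega
  refine ⟨σ x1, σ x2, σ x3, σ x4,
    ⟨by simp [hne1 x2 hx2], by simp [hne1 x3 hx3], by simp [hne1 x4 hx4],
     by simp [h23], by simp [h24], by simp [h34]⟩, ?_, ?_, ?_⟩
  · constructor
    · exact (rel_iff_rkOf_le hTot htr _ _).2 (by rw [hrk, hrk, hx1, hx2]; omega)
    · intro hcc
      have := (rel_iff_rkOf_le hTot htr _ _).1 hcc
      rw [hrk, hrk, hx1, hx2] at this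
      omega
  · exact ⟨(rel_iff_rkOf_le hTot htr _ _).2 (by rw [hrk, hrk, hx2, hx3]),
      (rel_iff_rkOf_le hTot htr _ _).2 (by rw [hrk, hrk, hx2, hx3])⟩
  · exact ⟨(rel_iff_rkOf_le hTot htr _ _).2 (by rw [hrk, hrk, hx3, hx4]),
      (rel_iff_rkOf_le hTot htr _ _).2 (by rw [hrk, hrk, hx3, hx4])⟩

end QL

/-! ### the main bijection -/

lemma isoRel_equivalence (n : ℕ) : Equivalence (isoRel n) := by
  constructor
  · intro R
    exact ⟨Equiv.refl _, fun x y => Iff.rfl⟩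
  · rintro R S ⟨φ, hφ⟩
    refine ⟨φ.symm, fun x y => ?_⟩
    rw [hφ (φ.symm x) (φ.symm y)]
    simp
  · rintro R S T ⟨φ, hφ⟩ ⟨ψ, hψ⟩
    exact ⟨ψ.trans φ, fun x y => (hψ x y).trans (hφ (ψ x) (ψ y))⟩

lemma card_quot (n : ℕ) :
    Nat.card (Quot (isoRel n)) =
      Nat.card {c : Composition n // ∀ b ∈ c.blocks.tail, b = 1 ∨ b = 2} := by
  symm
  apply Nat.card_eq_of_bijective
    (f := fun c : {c : Composition n // ∀ b ∈ c.blocks.tail, b = 1 ∨ b = 2} =>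
      Quot.mk (isoRel n) ⟨RC c.1, RC_total c.1, RC_trans c.1, twoQL_RC c.1 c.2⟩)
  constructor
  · intro c c' h
    replace h := Quot.eqvGen_exact h
    obtain ⟨φ, hφ⟩ := ((isoRel_equivalence n).eqvGen_iff).1 h
    apply Subtype.ext
    apply Composition.ext
    have h1 : compOf (fun x => (c'.1.index x : ℕ)) =
        compOf ((fun x => (c.1.index x : ℕ)) ∘ φ) :=
      compOf_congr (fun x y => hφ x y)
    rw [compOf_comp_equiv] at h1
    rw [← compOf_index c'.1, ← compOf_index c.1]
    exact h1.symm
  · intro q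
    obtain ⟨⟨R, hTot, htr, hQ⟩, rfl⟩ := Quot.exists_rep q
    set σ := Tuple.sort (rkOf R) with hσ
    set g : Fin n → ℕ := rkOf R ∘ σ with hg
    have hmono : Monotone g := Tuple.monotone_sort (rkOf R)
    set c : Composition n := ⟨compOf g, fun hb => compOf_pos g hb, compOf_sum g⟩ with hcd
    have htail : ∀ b ∈ c.blocks.tail, b = 1 ∨ b = 2 :=
      tail_compOf_of_twoQL hTot htr hQ σ
    refine ⟨⟨c, htail⟩, ?_⟩
    have hidx : compOf (fun x => (c.index x : ℕ)) = compOf g := by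
      rw [compOf_index]
    have hle := le_iff_of_compOf_eq (index_mono c) hmono hidx
    have hrel : ∀ x y, RC c x y ↔ R (σ x) (σ y) := fun x y =>
      (hle x y).trans (rel_iff_rkOf_le hTot htr (σ x) (σ y)).symm
    exact (Quot.sound ⟨σ, hrel⟩).symm



end Stmt16

theorem stmt_16 (n : ℕ) (hn : 1 ≤ n) :
    Nat.card (Quot (isoRel n)) = Nat.fib (n + 2) - 1 ∧
      Nat.card {c : Composition n // ∀ b ∈ c.blocks.tail, b = 1 ∨ b = 2}
        = Nat.fib (n + 2) - 1 :=
  ⟨(Stmt16.card_quot n).trans (Stmt16.card_goodComp n hn), Stmt16.card_goodComp n hn⟩
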